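/- Let X ⊆ {0,1}^ω with 0^ω ∉ X. Then for every x ∈ ({0,1} ∪ {◁_n : 0 < n < ω})^ω, x ∈ X^{≈∞} if and only if f_∞(x) ∈ X; that is, X^{≈∞} = f_∞^{-1}(X). In particular, if X is Borel then X^{≈∞} is Borel. -/
import Mathlib


open Set MeasureTheory

/-! ### Discrete topology on `Option` (the alphabet `A ∪ {◁}`) -/

instance optionTopology (A : Type*) : TopologicalSpace (Option A) := ⊥
instance optionDiscrete (A : Type*) : DiscreteTopology (Option A) := ⟨rfl⟩

/-! ### Finite-word eraser evaluation -/

/-- One step of the left-to-right backspace evaluation; the accumulator holds the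
(reversed) surviving word, `none` meaning the evaluation is undefined. -/
def eraseStep {B : Type*} [DecidableEq B] (e : B) (acc : Option (List B)) (a : B) :
    Option (List B) :=
  acc.bind fun l =>
    if a = e then (match l with | [] => none | _ :: t => some t) else some (a :: l)

/-- `finErase e u` is `some (u^e)` if the evaluation of the eraser `e` in `u` is
defined, and `none` otherwise. -/
def finErase {B : Type*} [DecidableEq B] (e : B) (u : List B) : Option (List B) :=
  (u.foldl (eraseStep e) (some [])).map List.reverse

/-- The length-`n` prefix `x[n]` of an infinite word. -/
def pre {B : Type*} (x : ℕ → B) (n : ℕ) : List B := (List.range n).map x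

/-- The infinite word `y` is the limit of the sequence of words `s n`
(every finite prefix of `y` eventually stabilizes). -/
def LimitsTo {B : Type*} (s : ℕ → ℕ → B) (y : ℕ → B) : Prop :=
  ∀ k : ℕ, ∃ N : ℕ, ∀ p ≥ N, ∀ i < k, s p i = y i

/-- `ErasesTo e x y` expresses that `x^e` is defined, infinite and equal to `y`:
all prefix evaluations `(x[p])^e` are defined, and for every `k` the length-`k`
prefix of `(x[p])^e` is eventually the length-`k` prefix of `y`. -/
def ErasesTo {B : Type*} [DecidableEq B] (e : B) (x y : ℕ → B) : Prop :=
  (∀ n, (finErase e (pre x n)).isSome) ∧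
  ∀ k : ℕ, ∃ N : ℕ, ∀ p ≥ N, ∀ l, finErase e (pre x p) = some l → l.take k = pre y k

/-- `X^≈ ⊆ (A ∪ {◁})^ω`, the eraser symbol `◁` being coded by `none`. -/
def ApproxSet {A : Type*} [DecidableEq A] (X : Set (ℕ → A)) : Set (ℕ → Option A) :=
  {x | ∃ y : ℕ → A, ErasesTo (none : Option A) x (fun i => some (y i)) ∧ y ∈ X}

/-! ### Wadge reducibility -/

/-- `S ≤_W T` : `S` is the preimage of `T` under some continuous map. -/
def WadgeLE {X Y : Type*} [TopologicalSpace X] [TopologicalSpace Y]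
    (S : Set X) (T : Set Y) : Prop :=
  ∃ f : X → Y, Continuous f ∧ S = f ⁻¹' T

/-! ### The Borel hierarchy (finite levels and level `ω`) -/

/-- The class `Σ^0_n` for finite `n ≥ 1`: `Σ^0_1` is the class of open sets and,
for `ξ > 1`, `Σ^0_ξ` is the class of countable unions of sets each of which is the
complement of a `Σ^0_{ξ'}` set for some `1 ≤ ξ' < ξ`. -/
def SigmaFin (X : Type*) [TopologicalSpace X] : ℕ → Set (Set X)
  | 0 => ∅
  | 1 => {s | IsOpen s}
  | (n+2) => {s | ∃ (f : ℕ → Set X) (m : ℕ → Fin (n+2)),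
      (∀ k, 1 ≤ (m k : ℕ) ∧ (f k)ᶜ ∈ SigmaFin X (m k)) ∧ s = ⋃ k, f k}
  termination_by n => n
  decreasing_by exact (m k).isLt

/-- `Π^0_n` : complements of `Σ^0_n` sets. -/
def PiFin (X : Type*) [TopologicalSpace X] (n : ℕ) : Set (Set X) :=
  {s | sᶜ ∈ SigmaFin X n}

/-- `Δ^0_n`. -/
def DeltaFin (X : Type*) [TopologicalSpace X] (n : ℕ) : Set (Set X) :=
  SigmaFin X n ∩ PiFin X n

/-- `Σ^0_ω` : countable unions of sets each in some `Π^0_{ξ'}` with `1 ≤ ξ' < ω`. -/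
def SigmaOmega (X : Type*) [TopologicalSpace X] : Set (Set X) :=
  {s | ∃ (f : ℕ → Set X) (m : ℕ → ℕ),
      (∀ k, 1 ≤ m k ∧ f k ∈ PiFin X (m k)) ∧ s = ⋃ k, f k}

/-- `Π^0_ω` : complements of `Σ^0_ω` sets. -/
def PiOmega (X : Type*) [TopologicalSpace X] : Set (Set X) :=
  {s | sᶜ ∈ SigmaOmega X}

/-- `Δ^0_ω = Σ^0_ω ∩ Π^0_ω`. -/
def DeltaOmega (X : Type*) [TopologicalSpace X] : Set (Set X) :=
  SigmaOmega X ∩ PiOmega X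

/-- `S ⊆ A^ω` is `Π^0_n`-complete: it is `Π^0_n` and every `Π^0_n` subset of a space
of infinite words over a finite alphabet (with the discrete topology) Wadge-reduces
to it. -/
def PiFinComplete {A : Type*} [TopologicalSpace A] (n : ℕ) (S : Set (ℕ → A)) : Prop :=
  S ∈ PiFin (ℕ → A) n ∧
    ∀ (B : Type) [Fintype B] [TopologicalSpace B] [DiscreteTopology B],
      ∀ T : Set (ℕ → B), T ∈ PiFin (ℕ → B) n → WadgeLE T S
/-! ### The alphabet `{0,1} ∪ {◁_n : 0 < n < ω}` and iterated erasing -/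

/-- The alphabet `{0,1} ∪ {◁_n : 0 < n < ω}` : `Sum.inl b` is the binary letter `b`
(`false` for `0`, `true` for `1`) and `Sum.inr k` is the eraser `◁_{k+1}`. -/
abbrev Letter : Type := Bool ⊕ ℕ

/-- The binary letter `0` or `1` viewed in the extended alphabet. -/
def ltr (b : Bool) : Letter := Sum.inl b

/-- The eraser `◁_{k+1}`. -/
def er (k : ℕ) : Letter := Sum.inr k

/-- `X^{≈∞}` for `X ⊆ {0,1}^ω` : those `x` such that each successive eraser
evaluation `x_n = (((x^{◁_1})^{◁_2})^…)^{◁_n}` is defined and infinite, and the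
limit of the `x_n` is defined, infinite, and belongs to `X`. -/
def InfEraseSet (X : Set (ℕ → Bool)) : Set (ℕ → Letter) :=
  {x | ∃ s : ℕ → (ℕ → Letter),
        s 0 = x ∧ (∀ n : ℕ, ErasesTo (er n) (s n) (s (n + 1))) ∧
        ∃ y : ℕ → Bool, y ∈ X ∧ LimitsTo s (fun i => ltr (y i))}

open Classical in
/-- `f(x) = x^◁` if `x^◁` is defined and infinite, and `f(x) = 0^ω` otherwise
(the eraser `◁` is coded by `none`, and `z` plays the role of the letter `0`). -/
noncomputable def eraseFun {A : Type*} [DecidableEq A] (z : A) (x : ℕ → Option A) :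
    ℕ → A :=
  if h : ∃ y : ℕ → A, ErasesTo (none : Option A) x (fun i => some (y i)) then h.choose
  else fun _ => z

open Classical in
/-- `f_{k+1}(x) = x^{◁_{k+1}}` if this is defined and infinite, `0^ω` otherwise. -/
noncomputable def fStep (k : ℕ) (x : ℕ → Letter) : ℕ → Letter :=
  if h : ∃ y : ℕ → Letter, ErasesTo (er k) x y then h.choose else fun _ => ltr false

/-- `fFun 0 = id` and `fFun (k+1) = f_{k+1}`. -/
noncomputable def fFun : ℕ → (ℕ → Letter) → (ℕ → Letter)
  | 0 => id
  | (k+1) => fStep k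

/-- `fIter n = f_n ∘ … ∘ f_1` (with `fIter 0 = id`). -/
noncomputable def fIter : ℕ → (ℕ → Letter) → (ℕ → Letter)
  | 0 => id
  | (n+1) => fun x => fStep n (fIter n x)

open Classical in
/-- `f_∞(x) = lim_{n<ω} (f_n ∘ … ∘ f_1)(x)` if this limit is defined and infinite
(and over `{0,1}`), and `f_∞(x) = 0^ω` otherwise. -/
noncomputable def fInf (x : ℕ → Letter) : ℕ → Bool :=
  if h : ∃ y : ℕ → Bool, LimitsTo (fun n => fIter n x) (fun i => ltr (y i)) then h.choose
  else fun _ => false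

/-- The set of infinite binary words containing infinitely many `1`s. -/
def InfManyOnes : Set (ℕ → Bool) := {y | {i | y i = true}.Infinite}
/-! ### The languages `L_n`, `L_∞`, `W`, and `ω`-powers -/

/-- Successive evaluation of the erasers `◁_1, …, ◁_n` (coded by
`Sum.inr 0, …, Sum.inr (n-1)`) on a finite word over `{0,1,◁_1,…,◁_n}`;
`none` if some evaluation is undefined. -/
def eraseChain (n : ℕ) (u : List (Bool ⊕ Fin n)) : Option (List (Bool ⊕ Fin n)) :=
  (List.finRange n).foldl (fun acc i => acc.bind (finErase (Sum.inr i))) (some u)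

/-- The language `L_n ⊆ {0,1,◁_1,…,◁_n}^*`: the words whose successive eraser
evaluations (first `◁_1`, then `◁_2`, …, then `◁_n`, each being defined) yield a
word in `0^*1`. -/
def Lword (n : ℕ) : Language (Bool ⊕ Fin n) :=
  {u | ∃ v, eraseChain n u = some v ∧
        ∃ k : ℕ, v = List.replicate k (Sum.inl false) ++ [Sum.inl true]}

/-- The eight-letter alphabet `{0, 1, α, B, C, D, E, β}`, coded as
`0, 1, 2, 3, 4, 5, 6, 7` respectively. -/
abbrev Gam : Type := Fin 8

/-- The code `α B^j C^j D^j E^j β` of the eraser `◁_j`. -/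
def eraserCode (j : ℕ) : List Gam :=
  (2 : Gam) :: (List.replicate j (3 : Gam) ++ List.replicate j (4 : Gam) ++
    List.replicate j (5 : Gam) ++ List.replicate j (6 : Gam) ++ [(7 : Gam)])

/-- Encoding of a letter of `{0,1,◁_1,…,◁_n}` over `{0, 1, α, B, C, D, E, β}` :
binary letters are kept, and `◁_j` is replaced by its code. -/
def encLetter {n : ℕ} : Bool ⊕ Fin n → List Gam
  | Sum.inl false => [(0 : Gam)]
  | Sum.inl true => [(1 : Gam)]
  | Sum.inr i => eraserCode ((i : ℕ) + 1)

/-- `L_∞ = ⋃_{n<ω} L_n`, with each eraser replaced by its code. -/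
def Linf : Language Gam :=
  {w | ∃ n : ℕ, ∃ u ∈ Lword n, w = (u.map encLetter).flatten}

/-- A wrong code: a word beginning with `α` and ending with `β` which is not of
the form `α B^j C^j D^j E^j β` for any `j ≥ 1`. -/
def IsWrongCode (v : List Gam) : Prop :=
  v.head? = some (2 : Gam) ∧ v.getLast? = some (7 : Gam) ∧ ¬ ∃ j ≥ 1, v = eraserCode j

/-- `W` : the finite words over `{0, 1, α, B, C, D, E, β}` containing (as a
subword, i.e. an infix) an occurrence of a wrong code. -/
def Wlang : Language Gam := {w | ∃ v, IsWrongCode v ∧ v <:+: w}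

/-- `l` is a prefix of the infinite word `x`. -/
def IsPrefixOfWord {A : Type*} (l : List A) (x : ℕ → A) : Prop :=
  l = (List.range l.length).map x

/-- The `ω`-power `V^ω = {u_1 u_2 … : ∀ n, u_n ∈ V \ {ε}}` of a language of
finite words. -/
def omegaPower {A : Type*} (V : Language A) : Set (ℕ → A) :=
  {x | ∃ u : ℕ → List A, (∀ n, u n ∈ V ∧ u n ≠ []) ∧
        ∀ n, IsPrefixOfWord (((List.range n).map u).flatten) x}

/-- The finite word `v` occurs in the infinite word `x` at position `i`. -/
def OccursAt {A : Type*} [Inhabited A] (v : List A) (x : ℕ → A) (i : ℕ) : Prop :=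
  ∀ j < v.length, x (i + j) = v.getD j default

/-- A wrong code occurs in `x` at position `i`. -/
def WrongAt (x : ℕ → Gam) (i : ℕ) : Prop := ∃ v, IsWrongCode v ∧ OccursAt v x i

/-- The concatenation `w · y` of a finite word and an infinite word. -/
def wordAppend {A : Type*} (w : List A) (y : ℕ → A) : ℕ → A :=
  fun i => if h : i < w.length then w.get ⟨i, h⟩ else y (i - w.length)

/-- `U · Z = {u y : u ∈ U, y ∈ Z}` for `U` a set of finite words and `Z` a set of
infinite words. -/
def concatSet {A : Type*} (U : Language A) (Z : Set (ℕ → A)) : Set (ℕ → A) :=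
  {x | ∃ u ∈ U, ∃ y ∈ Z, x = wordAppend u y}

/-- The language `V = L_∞ ∪ W`. -/
def Vlang : Language Gam := {w | w ∈ Linf ∨ w ∈ Wlang}


section Helpers
variable {B : Type*} [DecidableEq B]

lemma foldl_no_erase (e : B) (u : List B) (hu : ∀ a ∈ u, a ≠ e) (l : List B) :
    u.foldl (eraseStep e) (some l) = some (u.reverse ++ l) := by
  induction u generalizing l with
  | nil => simp
  | cons a t ih =>
    have ha : a ≠ e := hu a (by simp)
    have : eraseStep e (some l) a = some (a :: l) := by simp [eraseStep, ha]
    simp only [List.foldl_cons, this, ih (fun b hb => hu b (by simp [hb])),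
      List.reverse_cons, List.append_assoc, List.cons_append, List.nil_append]

lemma finErase_no_erase (e : B) (u : List B) (hu : ∀ a ∈ u, a ≠ e) :
    finErase e u = some u := by
  simp [finErase, foldl_no_erase e u hu []]

lemma pre_getElem? {x : ℕ → B} {n i : ℕ} (h : i < n) : (pre x n)[i]? = some (x i) := by
  simp [pre, List.getElem?_range, h]

lemma pre_length (x : ℕ → B) (n : ℕ) : (pre x n).length = n := by simp [pre]

lemma pre_take (x : ℕ → B) {k n : ℕ} (h : k ≤ n) : (pre x n).take k = pre x k := by
  simp [pre, ← List.map_take, List.take_range, Nat.min_eq_left h]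

lemma take_eq_pre {l : List B} {y : ℕ → B} {k : ℕ}
    (h : ∀ j < k, l[j]? = some (y j)) : l.take k = pre y k := by
  apply List.ext_getElem?
  intro i
  by_cases hik : i < k
  · rw [List.getElem?_take, if_pos hik, h i hik, pre_getElem? hik]
  · rw [List.getElem?_take, if_neg hik,
      List.getElem?_eq_none (by rw [pre_length]; omega)]

lemma pre_eq_of_take {y y' : ℕ → B} {k : ℕ} (h : pre y k = pre y' k) :
    ∀ i < k, y i = y' i := by
  intro i hik
  have := congrArg (fun l => l[i]?) h
  simpa [pre_getElem? hik] using this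

lemma erasesTo_refl (e : B) (x : ℕ → B) (hx : ∀ i, x i ≠ e) : ErasesTo e x x := by
  have hno : ∀ n, finErase e (pre x n) = some (pre x n) := fun n =>
    finErase_no_erase e _ (by intro a ha; simp only [pre, List.mem_map] at ha
                              obtain ⟨i, -, rfl⟩ := ha; exact hx i)
  constructor
  · intro n; rw [hno n]; rfl
  · intro k
    refine ⟨k, fun p hp l hl => ?_⟩
    rw [hno p] at hl
    cases hl
    exact pre_take x hp

lemma erasesTo_stab {e : B} {x y : ℕ → B} (h : ErasesTo e x y) (j : ℕ) :
    ∃ N, ∀ p ≥ N, ∀ l, finErase e (pre x p) = some l → l[j]? = some (y j) := by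
  obtain ⟨N, hN⟩ := h.2 (j + 1)
  refine ⟨N, fun p hp l hl => ?_⟩
  have := congrArg (fun l => l[j]?) (hN p hp l hl)
  simpa [List.getElem?_take, pre_getElem? (Nat.lt_succ_self j)] using this

lemma erasesTo_unique {e : B} {x y y' : ℕ → B} (h : ErasesTo e x y)
    (h' : ErasesTo e x y') : y = y' := by
  funext i
  obtain ⟨N, hN⟩ := erasesTo_stab h i
  obtain ⟨N', hN'⟩ := erasesTo_stab h' i
  set p := max N N'
  obtain ⟨l, hl⟩ := Option.isSome_iff_exists.mp (h.1 p)
  have h1 := hN p (le_max_left _ _) l hl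
  have h2 := hN' p (le_max_right _ _) l hl
  rw [h1] at h2
  exact Option.some_injective _ h2

lemma limitsTo_coord {B' : Type*} {s : ℕ → ℕ → B'} {y : ℕ → B'} (h : LimitsTo s y)
    (i : ℕ) : ∃ N, ∀ p ≥ N, s p i = y i := by
  obtain ⟨N, hN⟩ := h (i + 1)
  exact ⟨N, fun p hp => hN p hp i (Nat.lt_succ_self i)⟩

lemma limitsTo_unique {B' : Type*} {s : ℕ → ℕ → B'} {y y' : ℕ → B'}
    (h : LimitsTo s y) (h' : LimitsTo s y') : y = y' := by
  funext i
  obtain ⟨N, hN⟩ := limitsTo_coord h i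
  obtain ⟨N', hN'⟩ := limitsTo_coord h' i
  have h1 := hN (max N N') (le_max_left _ _)
  have h2 := hN' (max N N') (le_max_right _ _)
  rw [h1] at h2
  exact h2

end Helpers

lemma ltr_ne_er (b : Bool) (k : ℕ) : ltr b ≠ er k := by simp [ltr, er]

lemma fStep_eq {k : ℕ} {x y : ℕ → Letter} (h : ErasesTo (er k) x y) :
    fStep k x = y := by
  rw [fStep, dif_pos ⟨y, h⟩]
  exact erasesTo_unique (Exists.choose_spec (⟨y, h⟩ : ∃ y, ErasesTo (er k) x y)) h

lemma fInf_eq {x : ℕ → Letter} {y : ℕ → Bool}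
    (h : LimitsTo (fun n => fIter n x) (fun i => ltr (y i))) : fInf x = y := by
  rw [fInf, dif_pos ⟨y, h⟩]
  have := limitsTo_unique
    (Exists.choose_spec (⟨y, h⟩ : ∃ y : ℕ → Bool,
      LimitsTo (fun n => fIter n x) (fun i => ltr (y i)))) h
  funext i
  have := congrFun this i
  simpa [ltr] using this

lemma fIter_succ (n : ℕ) (x : ℕ → Letter) : fIter (n + 1) x = fStep n (fIter n x) := rfl

lemma key_iff (X : Set (ℕ → Bool)) (hX : (fun _ => false) ∉ X) (x : ℕ → Letter) :
    x ∈ InfEraseSet X ↔ fInf x ∈ X := by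
  constructor
  · rintro ⟨s, hs0, hse, y, hyX, hlim⟩
    have hiter : ∀ n, fIter n x = s n := by
      intro n
      induction n with
      | zero => simp [fIter, hs0]
      | succ n ih => rw [fIter_succ, ih, fStep_eq (hse n)]
    have : (fun n => fIter n x) = s := funext hiter
    rw [fInf_eq (this ▸ hlim)]
    exact hyX
  · intro h
    by_cases hE : ∃ y : ℕ → Bool, LimitsTo (fun n => fIter n x) (fun i => ltr (y i))
    · have hfx : fInf x = hE.choose := by rw [fInf, dif_pos hE]
      have hlim := hE.choose_spec
      have hall : ∀ n, ∃ z, ErasesTo (er n) (fIter n x) z := by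
        by_contra hcon
        push_neg at hcon
        obtain ⟨n, hn⟩ := hcon
        have h1 : fIter (n + 1) x = fun _ => ltr false := by
          rw [fIter_succ, fStep, dif_neg (by push_neg; exact hn)]
        have hconst : ∀ m, fIter (n + 1 + m) x = fun _ => ltr false := by
          intro m
          induction m with
          | zero => exact h1
          | succ m ih =>
            have : fIter (n + 1 + (m + 1)) x = fStep (n + 1 + m) (fIter (n + 1 + m) x) := rfl
            rw [this, ih, fStep_eq (erasesTo_refl _ _ (fun _ => ltr_ne_er false _))]
        have hy0 : hE.choose = fun _ => false := by
          funext i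
          obtain ⟨N, hN⟩ := limitsTo_coord hlim i
          have h2 := hN (max N (n + 1)) (le_max_left _ _)
          have h3 : fIter (max N (n + 1)) x = fun _ => ltr false := by
            have : max N (n + 1) = n + 1 + (max N (n + 1) - (n + 1)) := by omega
            rw [this]; exact hconst _
          rw [h3] at h2
          have : ltr false = ltr (hE.choose i) := h2
          simpa [ltr] using this.symm
        rw [hy0] at hfx
        exact hX (hfx ▸ h)
      refine ⟨fun n => fIter n x, rfl, fun n => ?_, hE.choose, hfx ▸ h, hlim⟩
      show ErasesTo (er n) (fIter n x) (fIter (n + 1) x)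
      rw [fIter_succ, fStep, dif_pos (hall n)]
      exact (hall n).choose_spec
    · have : fInf x = fun _ => false := by rw [fInf, dif_neg hE]
      exact absurd (this ▸ h) hX

/-! ### Measurability -/

lemma letter_allMeas (s : Set Letter) : MeasurableSet s := by
  rw [measurableSet_sum_iff]; exact ⟨trivial, trivial⟩

instance : OpensMeasurableSpace Letter := ⟨fun s _ => letter_allMeas s⟩

lemma pre_eq_ofFn (x : ℕ → Letter) (p : ℕ) :
    pre x p = List.ofFn (fun i : Fin p => x i) := by
  apply List.ext_getElem (by simp [pre])
  intro i h1 h2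
  simp [pre]

lemma cylMeasurable (p : ℕ) (P : List Letter → Prop) :
    MeasurableSet[borel (ℕ → Letter)] {x | P (pre x p)} := by
  have hco : Continuous (fun (x : ℕ → Letter) (i : Fin p) => x i) :=
    continuous_pi fun i => continuous_apply (i : ℕ)
  have hopen : IsOpen {x : ℕ → Letter | P (pre x p)} := by
    have heq : {x : ℕ → Letter | P (pre x p)} =
        (fun (x : ℕ → Letter) (i : Fin p) => x i) ⁻¹'
          {v : Fin p → Letter | P (List.ofFn v)} := by
      ext x
      simp [pre_eq_ofFn]
    rw [heq]
    exact (isOpen_discrete _).preimage hco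
  exact MeasurableSpace.measurableSet_generateFrom hopen

/-- The stable value of `finErase` prefix evaluations. -/
def Stab (e : Letter) (x : ℕ → Letter) (j : ℕ) (a : Letter) : Prop :=
  ∃ N, ∀ p ≥ N, ∀ l, finErase e (pre x p) = some l → l[j]? = some a

/-- The domain condition for the eraser `e`. -/
def Dom (e : Letter) (x : ℕ → Letter) : Prop :=
  (∀ n, (finErase e (pre x n)).isSome) ∧ ∀ j, ∃ a, Stab e x j a

lemma imp_meas {m : MeasurableSpace (ℕ → Letter)} {A : Prop} {S : Set (ℕ → Letter)}
    (hS : MeasurableSet[m] S) : MeasurableSet[m] {x | A → x ∈ S} := by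
  by_cases hA : A
  · simpa [hA] using hS
  · simp [hA]

lemma stab_measurable (e : Letter) (j : ℕ) (a : Letter) :
    MeasurableSet[borel (ℕ → Letter)] {x | Stab e x j a} := by
  have : {x | Stab e x j a} =
      ⋃ N, ⋂ p, {x : ℕ → Letter | p ≥ N →
        ∀ l, finErase e (pre x p) = some l → l[j]? = some a} := by
    ext x; simp [Stab, Set.mem_iUnion, Set.mem_iInter]
  rw [this]
  exact MeasurableSet.iUnion fun N => MeasurableSet.iInter fun p =>
    imp_meas (cylMeasurable p (fun u => ∀ l, finErase e u = some l → l[j]? = some a))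

lemma dom_measurable (e : Letter) :
    MeasurableSet[borel (ℕ → Letter)] {x | Dom e x} := by
  have : {x | Dom e x} =
      (⋂ n, {x : ℕ → Letter | (finErase e (pre x n)).isSome = true}) ∩
      (⋂ j, ⋃ a : Letter, {x | Stab e x j a}) := by
    ext x; simp [Dom, Set.mem_iInter, Set.mem_iUnion]
  rw [this]
  exact (MeasurableSet.iInter fun n =>
      cylMeasurable n (fun u => (finErase e u).isSome = true)).inter
    (MeasurableSet.iInter fun j => MeasurableSet.iUnion fun a => stab_measurable e j a)

lemma stab_unique {e : Letter} {x : ℕ → Letter} {j : ℕ} {a a' : Letter}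
    (h1 : ∀ n, (finErase e (pre x n)).isSome)
    (ha : Stab e x j a) (ha' : Stab e x j a') : a = a' := by
  obtain ⟨N, hN⟩ := ha
  obtain ⟨N', hN'⟩ := ha'
  obtain ⟨l, hl⟩ := Option.isSome_iff_exists.mp (h1 (max N N'))
  have k1 := hN _ (le_max_left _ _) l hl
  have k2 := hN' _ (le_max_right _ _) l hl
  rw [k1] at k2
  exact Option.some_injective _ k2

lemma dom_iff (e : Letter) (x : ℕ → Letter) :
    Dom e x ↔ ∃ y, ErasesTo e x y := by
  constructor
  · rintro ⟨h1, h2⟩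
    have hs : ∀ j, Stab e x j ((h2 j).choose) := fun j => (h2 j).choose_spec
    refine ⟨fun j => (h2 j).choose, h1, fun k => ?_⟩
    refine ⟨(Finset.range k).sup (fun j => (hs j).choose), fun p hp l hl => ?_⟩
    apply take_eq_pre
    intro j hj
    exact (hs j).choose_spec p
      (le_trans (Finset.le_sup (f := fun j => (hs j).choose) (Finset.mem_range.mpr hj)) hp) l hl
  · rintro ⟨y, hy⟩
    exact ⟨hy.1, fun j => ⟨y j, erasesTo_stab hy j⟩⟩

lemma fStep_coord_meas (k : ℕ) (j : ℕ) (a : Letter) :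
    MeasurableSet[borel (ℕ → Letter)] {x | fStep k x j = a} := by
  have heq : {x | fStep k x j = a} =
      ({x | Dom (er k) x} ∩ {x | Stab (er k) x j a}) ∪
      ({x | Dom (er k) x}ᶜ ∩ {x : ℕ → Letter | a = ltr false}) := by
    ext x
    simp only [Set.mem_union, Set.mem_inter_iff, Set.mem_compl_iff, Set.mem_setOf_eq]
    by_cases hd : Dom (er k) x
    · have hE : ∃ y, ErasesTo (er k) x y := (dom_iff _ x).mp hd
      obtain ⟨y, hy⟩ := hE
      rw [fStep_eq hy]
      constructor
      · rintro rfl; exact Or.inl ⟨hd, erasesTo_stab hy j⟩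
      · rintro (⟨-, hs⟩ | ⟨hnd, -⟩)
        · exact stab_unique hd.1 (erasesTo_stab hy j) hs
        · exact absurd hd hnd
    · have : fStep k x = fun _ => ltr false := by
        rw [fStep, dif_neg]
        rw [← dom_iff] at *; exact hd
      rw [this]
      constructor
      · rintro rfl; exact Or.inr ⟨hd, rfl⟩
      · rintro (⟨hdd, -⟩ | ⟨-, rfl⟩)
        · exact absurd hdd hd
        · rfl
  rw [heq]
  exact ((dom_measurable _).inter (stab_measurable _ j a)).union
    ((dom_measurable _).compl.inter (MeasurableSet.const _))

lemma fStep_measurable (k : ℕ) :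
    @Measurable _ _ (borel (ℕ → Letter)) (borel (ℕ → Letter)) (fStep k) := by
  have h1 : @Measurable _ _ (borel (ℕ → Letter)) MeasurableSpace.pi (fStep k) := by
    refine (@measurable_pi_iff (ℕ → Letter) ℕ (fun _ => Letter) (borel _) _ (fStep k)).mpr ?_
    intro j
    refine @measurable_to_countable' Letter (ℕ → Letter) _ _ (borel _) _ ?_
    intro a
    have : (fun x => fStep k x j) ⁻¹' {a} = {x | fStep k x j = a} := by
      ext x; simp
    rw [this]
    exact fStep_coord_meas k j a
  exact fun s hs => h1 (OpensMeasurableSpace.borel_le _ hs)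

lemma fIter_measurable (n : ℕ) :
    @Measurable _ _ (borel (ℕ → Letter)) (borel (ℕ → Letter)) (fIter n) := by
  induction n with
  | zero => exact fun s hs => hs
  | succ n ih => exact Measurable.comp (fStep_measurable n) ih

lemma fIter_coord_meas (n j : ℕ) (a : Letter) :
    MeasurableSet[borel (ℕ → Letter)] {x | fIter n x j = a} := by
  have hopen : IsOpen {z : ℕ → Letter | z j = a} := by
    have : {z : ℕ → Letter | z j = a} = (fun z : ℕ → Letter => z j) ⁻¹' {a} := rfl
    rw [this]
    exact (isOpen_discrete ({a} : Set Letter)).preimage (continuous_apply j)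
  exact fIter_measurable n (MeasurableSpace.measurableSet_generateFrom hopen)

/-- The set of `x` whose iterated-erasure sequence converges to a binary word. -/
def LimSet : Set (ℕ → Letter) :=
  {x | ∀ j, ∃ b : Bool, ∃ N, ∀ n ≥ N, fIter n x j = ltr b}

lemma lim_iff (x : ℕ → Letter) :
    x ∈ LimSet ↔ ∃ y : ℕ → Bool, LimitsTo (fun n => fIter n x) (fun i => ltr (y i)) := by
  constructor
  · intro h
    have hb : ∀ j, ∃ N, ∀ n ≥ N, fIter n x j = ltr ((h j).choose) :=
      fun j => (h j).choose_spec
    refine ⟨fun j => (h j).choose, fun k => ?_⟩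
    refine ⟨(Finset.range k).sup (fun j => (hb j).choose), fun p hp i hik => ?_⟩
    exact (hb i).choose_spec p
      (le_trans (Finset.le_sup (f := fun j => (hb j).choose)
        (Finset.mem_range.mpr hik)) hp)
  · rintro ⟨y, hy⟩
    intro j
    obtain ⟨N, hN⟩ := limitsTo_coord hy j
    exact ⟨y j, N, hN⟩

lemma limSet_measurable : MeasurableSet[borel (ℕ → Letter)] LimSet := by
  have : LimSet = ⋂ j, ⋃ b : Bool, ⋃ N, ⋂ n,
      {x : ℕ → Letter | n ≥ N → fIter n x j = ltr b} := by
    ext x; simp [LimSet, Set.mem_iInter, Set.mem_iUnion]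
  rw [this]
  exact MeasurableSet.iInter fun j => MeasurableSet.iUnion fun b =>
    MeasurableSet.iUnion fun N => MeasurableSet.iInter fun n =>
      imp_meas (fIter_coord_meas n j (ltr b))

lemma fInf_coord_meas (i : ℕ) (b : Bool) :
    MeasurableSet[borel (ℕ → Letter)] {x | fInf x i = b} := by
  have heq : {x | fInf x i = b} =
      (LimSet ∩ {x | ∃ N, ∀ n ≥ N, fIter n x i = ltr b}) ∪
      (LimSetᶜ ∩ {x : ℕ → Letter | b = false}) := by
    ext x
    simp only [Set.mem_union, Set.mem_inter_iff, Set.mem_compl_iff, Set.mem_setOf_eq]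
    by_cases hL : x ∈ LimSet
    · have hE := (lim_iff x).mp hL
      have hfx : fInf x = hE.choose := by rw [fInf, dif_pos hE]
      have hlim := hE.choose_spec
      obtain ⟨N', hN'⟩ := limitsTo_coord hlim i
      rw [hfx]
      constructor
      · rintro rfl
        exact Or.inl ⟨hL, N', hN'⟩
      · rintro (⟨-, N, hN⟩ | ⟨hnl, -⟩)
        · have h1 := hN (max N N') (le_max_left _ _)
          have h2 := hN' (max N N') (le_max_right _ _)
          rw [h1] at h2
          simpa [ltr, eq_comm] using h2
        · exact absurd hL hnl
    · have hfx : fInf x = fun _ => false := by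
        rw [fInf, dif_neg]
        rw [show (∃ y : ℕ → Bool, LimitsTo (fun n => fIter n x)
          (fun i => ltr (y i))) = (x ∈ LimSet) from (propext (lim_iff x)).symm]
        exact hL
      rw [hfx]
      constructor
      · rintro rfl; exact Or.inr ⟨hL, rfl⟩
      · rintro (⟨hl, -⟩ | ⟨-, rfl⟩)
        · exact absurd hl hL
        · rfl
  rw [heq]
  refine (limSet_measurable.inter ?_).union
    (limSet_measurable.compl.inter (MeasurableSet.const _))
  have : {x : ℕ → Letter | ∃ N, ∀ n ≥ N, fIter n x i = ltr b} =
      ⋃ N, ⋂ n, {x : ℕ → Letter | n ≥ N → fIter n x i = ltr b} := by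
    ext x; simp [Set.mem_iUnion, Set.mem_iInter]
  rw [this]
  exact MeasurableSet.iUnion fun N => MeasurableSet.iInter fun n =>
    imp_meas (fIter_coord_meas n i (ltr b))

lemma fInf_measurable :
    @Measurable _ _ (borel (ℕ → Letter)) (borel (ℕ → Bool)) fInf := by
  have h1 : @Measurable _ _ (borel (ℕ → Letter)) MeasurableSpace.pi fInf := by
    refine (@measurable_pi_iff (ℕ → Letter) ℕ (fun _ => Bool) (borel _) _ fInf).mpr ?_
    intro i
    refine @measurable_to_countable' Bool (ℕ → Letter) _ _ (borel _) _ ?_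
    intro b
    have : (fun x => fInf x i) ⁻¹' {b} = {x | fInf x i = b} := by ext x; simp
    rw [this]
    exact fInf_coord_meas i b
  exact fun s hs => h1 (OpensMeasurableSpace.borel_le _ hs)

/-- For `X ⊆ {0,1}^ω` with `0^ω ∉ X` : `x ∈ X^{≈∞} ↔ f_∞(x) ∈ X`
for all `x`, i.e. `X^{≈∞} = f_∞⁻¹(X)`; in particular if `X` is Borel then so is
`X^{≈∞}`. -/
theorem infEraseSet_eq_preimage (X : Set (ℕ → Bool)) (hX : (fun _ => false) ∉ X) :
    (∀ x : ℕ → Letter, x ∈ InfEraseSet X ↔ fInf x ∈ X) ∧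
    InfEraseSet X = fInf ⁻¹' X ∧
    (MeasurableSet[borel (ℕ → Bool)] X →
      MeasurableSet[borel (ℕ → Letter)] (InfEraseSet X)) := by
  have h1 := key_iff X hX
  have h2 : InfEraseSet X = fInf ⁻¹' X := by
    ext x; exact h1 x
  exact ⟨h1, h2, fun hXB => h2 ▸ fInf_measurable hXB⟩
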